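/- Suppose b^{σ} ∈ ℝ^s satisfies b^{σ,T} c^{S,×2} = 1/3 and the fast method satisfies b^{F,T} c^{F} = 1/2. Then the GARK third-order coupling condition b^{σ,T} (C^{S} ⊗ b^{F,T}) (c^{S} ⊗ c^{F}) = 1/6 holds automatically. -/

import Mathlib

open Matrix Kronecker

/-- Kronecker product of two (column) vectors. -/
def kronVec {m r : ℕ} (u : Fin m → ℝ) (v : Fin r → ℝ) : Fin m × Fin r → ℝ :=
  fun p => u p.1 * v p.2

/-- Kronecker product of a matrix with a row vector: an `m × (n·r)` matrix. -/
def kronMatRow {m n r : ℕ} (A : Matrix (Fin m) (Fin n) ℝ) (v : Fin r → ℝ) :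
    Matrix (Fin m) (Fin n × Fin r) ℝ :=
  fun i q => A i q.1 * v q.2

/-- If `b^{σ,T} c^{S,×2} = 1/3` and `b^{F,T} c^F = 1/2`, then the GARK
third-order coupling condition `b^{σ,T}(C^S ⊗ b^{F,T})(c^S ⊗ c^F) = 1/6`
holds automatically. -/
theorem third_order_coupling_auto
    (s r : ℕ) (bσ cS : Fin s → ℝ) (bF cF : Fin r → ℝ)
    (hσ : bσ ⬝ᵥ (fun i => cS i ^ 2) = 1 / 3)
    (hF : bF ⬝ᵥ cF = 1 / 2) :
    bσ ⬝ᵥ (kronMatRow (Matrix.diagonal cS) bF).mulVec (kronVec cS cF) = 1 / 6 := by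
  have key : (kronMatRow (Matrix.diagonal cS) bF).mulVec (kronVec cS cF)
      = fun i => cS i ^ 2 * (bF ⬝ᵥ cF) := by
    funext i
    simp only [mulVec, dotProduct, kronMatRow, kronVec, Fintype.sum_prod_type]
    rw [Finset.sum_eq_single i]
    · simp [Matrix.diagonal_apply_eq, Finset.mul_sum]
      ring_nf
    · intro j _ hj
      simp [Matrix.diagonal_apply_ne' _ hj]
    · simp
  rw [key, hF]
  have : (bσ ⬝ᵥ fun i => cS i ^ 2 * (1 / 2)) = (bσ ⬝ᵥ fun i => cS i ^ 2) * (1 / 2) := by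
    simp [dotProduct, Finset.sum_mul]; ring_nf
  rw [this, hσ]; norm_num
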